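/- For every b with 0 ≤ b < bmax, F(b, iss) > 0; i.e., evaluated at the complete-markets rate iss = (1−β)/β, the natural-rate equation residual is strictly positive whenever the government-debt level lies strictly below the debt bound. -/

import Mathlib

/-- High-productivity stationary consumption denominator:
Dh(b,r) = w·zh + (1−β)·(1+r)·b·(1−zh) with w = (ε−1)/ε. -/
noncomputable def Dh (β ε zh : ℝ) (b r : ℝ) : ℝ :=
  ((ε - 1) / ε) * zh + (1 - β) * (1 + r) * b * (1 - zh)

/-- Low-productivity stationary consumption denominator:
Dl(b,r) = w·zl + (1−β)·(1+r)·b·(1−zl) with w = (ε−1)/ε. -/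
noncomputable def Dl (β ε zl : ℝ) (b r : ℝ) : ℝ :=
  ((ε - 1) / ε) * zl + (1 - β) * (1 + r) * b * (1 - zl)

/-- Natural-rate equation residual:
F(b,r) = β·ρ·(1+r)/Dh(b,r) + β·(1−ρ)·(1+r)/Dl(b,r) − ε/(ε−1). -/
noncomputable def F (β ε ρ zh zl : ℝ) (b r : ℝ) : ℝ :=
  β * ρ * (1 + r) / Dh β ε zh b r
    + β * (1 - ρ) * (1 + r) / Dl β ε zl b r
    - ε / (ε - 1)

lemma key_harm (ρ A B : ℝ) (hρ0 : 0 < ρ) (hρ1 : ρ < 1)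
    (hA : 0 < A) (hB : 0 < B) (hne : A ≠ B) :
    1 / (ρ * A + (1 - ρ) * B) < ρ / A + (1 - ρ) / B := by
  have hρ1' : 0 < 1 - ρ := by linarith
  have hw : 0 < ρ * A + (1 - ρ) * B := by positivity
  rw [div_add_div _ _ (ne_of_gt hA) (ne_of_gt hB), div_lt_div_iff₀ hw (by positivity)]
  have hAB := sub_ne_zero.mpr hne
  have h2 : (0:ℝ) < (A - B) ^ 2 := by positivity
  nlinarith [mul_pos (mul_pos hρ0 hρ1') h2]

/-- Evaluated at the complete-markets rate iss = (1−β)/β, the natural-rate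
equation residual is strictly positive whenever the debt level lies strictly
below the debt bound bmax. -/
theorem stmt_11 (β ε ρ zh zl : ℝ)
    (hβ0 : 0 < β) (hβ1 : β < 1) (hε : 1 < ε)
    (hρ0 : 0 < ρ) (hρ1 : ρ < 1)
    (hzl0 : 0 < zl) (hzl1 : zl < 1) (hzh : 1 < zh)
    (hmean : ρ * zh + (1 - ρ) * zl = 1) :
    ∀ b : ℝ, 0 ≤ b → b < ((ε - 1) / ε) * (β / (1 - β)) →
      F β ε ρ zh zl b ((1 - β) / β) > 0 := by
  intro b hb hblt
  have hβ : (β:ℝ) ≠ 0 := ne_of_gt hβ0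
  have hε0 : (0:ℝ) < ε := by linarith
  have hε1 : (0:ℝ) < ε - 1 := by linarith
  have hβ1' : (0:ℝ) < 1 - β := by linarith
  set w : ℝ := (ε - 1) / ε with hw
  have hw0 : 0 < w := by positivity
  set k : ℝ := (1 - β) * (1 + (1 - β) / β) * b with hk
  have hkval : k = (1 - β) / β * b := by
    rw [hk]; field_simp; ring
  have hk0 : 0 ≤ k := by
    rw [hkval]; positivity
  have hkw : k < w := by
    rw [hkval]
    have : (1 - β) / β * b < (1 - β) / β * (w * (β / (1 - β))) := by
      apply mul_lt_mul_of_pos_left hblt (by positivity)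
    calc (1 - β) / β * b < (1 - β) / β * (w * (β / (1 - β))) := this
      _ = w := by field_simp
  set A : ℝ := Dh β ε zh b ((1 - β) / β) with hA
  set B : ℝ := Dl β ε zl b ((1 - β) / β) with hB
  have hAval : A = w * zh + k * (1 - zh) := by
    rw [hA, Dh]
  have hBval : B = w * zl + k * (1 - zl) := by
    rw [hB, Dl]
  have hApos : 0 < A := by
    rw [hAval]; nlinarith
  have hBpos : 0 < B := by
    rw [hBval]; nlinarith
  have hne : A ≠ B := by
    rw [hAval, hBval]; nlinarith
  have hsum : ρ * A + (1 - ρ) * B = w := by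
    rw [hAval, hBval]; nlinarith [hmean]
  have hrec : ε / (ε - 1) = 1 / w := by
    rw [hw]; field_simp
  have hco : β * (1 + (1 - β) / β) = 1 := by field_simp; ring
  have hFeq : F β ε ρ zh zl b ((1 - β) / β) = ρ / A + (1 - ρ) / B - 1 / w := by
    rw [F, ← hA, ← hB, hrec]
    congr 1
    congr 1
    · rw [mul_assoc, mul_comm ρ, ← mul_assoc, hco, one_mul]
    · rw [mul_assoc, mul_comm (1 - ρ), ← mul_assoc, hco, one_mul]
  rw [hFeq]
  have := key_harm ρ A B hρ0 hρ1 hApos hBpos hne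
  rw [hsum] at this
  linarith
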